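/- If ≺ is a C_n-admissible ordering of [n] ∪ [n]*, then the n largest elements under ≺ form an admissible set of size n. -/
import Mathlib


/-- `J n` models `[n] ∪ [n]*` : the element `(i, false)` is `i` and `(i, true)` is `i*`. -/
abbrev J (n : ℕ) := Fin n × Bool

/-- The star involution `i ↦ i*`, `i* ↦ i`. -/
def jstar {n : ℕ} (x : J n) : J n := (x.1, !x.2)

/-- `K* = { k* : k ∈ K }`. -/
def starSet {n : ℕ} (K : Finset (J n)) : Finset (J n) := K.image jstar

/-- A subset `K ⊆ [n] ∪ [n]*` is admissible if `K ∩ K* = ∅`. -/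
def Admissible {n : ℕ} (K : Finset (J n)) : Prop := K ∩ starSet K = ∅

/-- in a `Cₙ`-admissible linear ordering of `[n] ∪ [n]*`, the `n` largest
elements form an admissible set (of size `n`). -/
theorem top_n_admissible (n : ℕ) (lt : J n → J n → Prop)
    (hlin : IsStrictTotalOrder (J n) lt)
    (hC : ∀ i j : J n, lt i j → lt (jstar j) (jstar i))
    (T : Finset (J n)) (hcard : T.card = n)
    (htop : ∀ x ∈ T, ∀ y ∉ T, lt y x) :
    Admissible T := by
  unfold Admissible
  by_contra h
  obtain ⟨x, hx⟩ := Finset.nonempty_iff_ne_empty.mpr h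
  rw [Finset.mem_inter] at hx
  obtain ⟨hxT, hxS⟩ := hx
  obtain ⟨z, hzT, hzx⟩ := Finset.mem_image.mp hxS
  have hz : z = jstar x := by
    rw [← hzx]; simp [jstar]
  have hstar : jstar x ∈ T := hz ▸ hzT
  have hne : x ≠ jstar x := by
    simp [jstar, Prod.ext_iff]
  have key : T.image Prod.fst ⊆ (T.erase (jstar x)).image Prod.fst := by
    intro a ha
    obtain ⟨b, hb, hba⟩ := Finset.mem_image.mp ha
    by_cases hbx : b = jstar x
    · exact Finset.mem_image.mpr ⟨x, Finset.mem_erase.mpr ⟨hne, hxT⟩,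
        by rw [← hba, hbx]; rfl⟩
    · exact Finset.mem_image.mpr ⟨b, Finset.mem_erase.mpr ⟨hbx, hb⟩, hba⟩
  have hn1 : 1 ≤ n := x.1.pos
  have hlt : (T.image Prod.fst).card ≤ n - 1 :=
    le_trans (Finset.card_le_card key)
      (le_trans Finset.card_image_le
        (by rw [Finset.card_erase_of_mem hstar, hcard]))
  obtain ⟨i, hi⟩ : ∃ i : Fin n, i ∉ T.image Prod.fst := by
    by_contra hall
    push_neg at hall
    have hsub : (Finset.univ : Finset (Fin n)) ⊆ T.image Prod.fst :=
      fun i _ => hall i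
    have := Finset.card_le_card hsub
    simp [Finset.card_univ] at this
    omega
  have hy1 : (i, false) ∉ T := fun h => hi (Finset.mem_image.mpr ⟨_, h, rfl⟩)
  have hy2 : (i, true) ∉ T := fun h => hi (Finset.mem_image.mpr ⟨_, h, rfl⟩)
  have h1 := htop x hxT (i, false) hy1
  have h2 := htop (jstar x) hstar (i, true) hy2
  have h3 := hC _ _ h2
  simp only [jstar, Bool.not_true, Bool.not_not] at h3
  have : lt x x := hlin.trans _ _ _ (show lt x (i, false) from h3) h1
  exact hlin.irrefl x this
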